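/- Let Pr₁ and Pr₂ be the joint distributions induced by two Bayesian networks over the same finite DAG whose CPTs agree on every variable except possibly X. Then for every instantiation p of the parents P of X, Pr₁(p) = 0 if and only if Pr₂(p) = 0; in fact Pr₁(P) = Pr₂(P) as distributions. -/

import Mathlib

attribute [local instance] Classical.propDecidable


lemma pi_sum_update {ι : Type*} [Fintype ι] [DecidableEq ι] {S : ι → Type*}
    [∀ i, Fintype (S i)] [∀ i, DecidableEq (S i)] (m : ι) (c : S m) (f : (∀ j, S j) → ℝ) :
    ∑ u : ∀ j, S j, f u
      = ∑ w : ∀ j, S j, ∑ x : S m, if w m = c then f (Function.update w m x) else 0 := by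
  have h1 : ∑ p : ((∀ j, S j) × S m), (if p.1 m = c then f (Function.update p.1 m p.2) else 0)
      = ∑ w : ∀ j, S j, ∑ x : S m, if w m = c then f (Function.update w m x) else 0 :=
    Fintype.sum_prod_type _
  rw [← h1, ← Finset.sum_filter]
  symm
  apply Finset.sum_nbij' (fun p => Function.update p.1 m p.2)
    (fun u => (Function.update u m c, u m))
  · intro a ha; exact Finset.mem_univ _
  · intro u _
    simp [Function.update_self]
  · intro p hp
    simp only [Finset.mem_filter] at hp
    have h2 : Function.update (Function.update p.1 m p.2) m c = p.1 := by
      funext j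
      by_cases hj : j = m
      · subst hj; simp [Function.update_self, hp.2]
      · simp [Function.update_of_ne hj]
    have h3 : Function.update p.1 m p.2 m = p.2 := Function.update_self _ _ _
    exact Prod.ext h2 h3
  · intro u _
    funext j
    by_cases hj : j = m
    · subst hj; simp [Function.update_self]
    · simp [Function.update_of_ne hj]
  · intro a ha; rfl

lemma marginal_sumout {ι : Type*} [Fintype ι] [DecidableEq ι]
    {S : ι → Type*} [∀ i, Fintype (S i)] [∀ i, DecidableEq (S i)]
    (E : ι → ι → Prop) (hacyc : ∀ i, ¬ Relation.TransGen E i i) (X : ι)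
    (F : (i : ι) → (∀ j, S j) → ℝ)
    (hloc : ∀ i v w, (∀ j, E j i → v j = w j) → v i = w i → F i v = F i w)
    (hsum : ∀ i v, ∑ x : S i, F i (Function.update v i x) = 1)
    (v : ∀ j, S j) :
    (∑ u : ∀ j, S j, if (∀ j, E j X → u j = v j) then ∏ i, F i u else 0)
      = ∑ u : ∀ j, S j,
          if ((∀ j, E j X → u j = v j) ∧
              ∀ j ∈ Finset.univ.filter (fun i => i = X ∨ Relation.TransGen E X i), u j = v j)
            then ∏ i ∈ (Finset.univ.filter (fun i => i = X ∨ Relation.TransGen E X i))ᶜ, F i u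
            else 0 := by
  set D := Finset.univ.filter (fun i => i = X ∨ Relation.TransGen E X i) with hD
  -- parents of X are not in D
  have hXpar : ∀ j, E j X → j ∉ D := by
    intro j hj hjD
    rw [hD, Finset.mem_filter] at hjD
    rcases hjD.2 with rfl | h
    · exact hacyc j (Relation.TransGen.single hj)
    · exact hacyc X (Relation.TransGen.tail h hj)
  -- D is closed under children
  have hDclosed : ∀ i ∈ D, ∀ c, E i c → c ∈ D := by
    intro i hi c hic
    rw [hD, Finset.mem_filter] at hi ⊢
    refine ⟨Finset.mem_univ _, Or.inr ?_⟩
    rcases hi.2 with rfl | h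
    · exact Relation.TransGen.single hic
    · exact Relation.TransGen.tail h hic
  -- well-foundedness
  have hwf : WellFounded (fun a b : ι => Relation.TransGen E b a) := by
    have ht : IsTrans ι (fun a b => Relation.TransGen E b a) :=
      ⟨fun a b c h1 h2 => Relation.TransGen.trans h2 h1⟩
    have hi : IsIrrefl ι (fun a b => Relation.TransGen E b a) := ⟨fun a h => hacyc a h⟩
    exact Finite.wellFounded_of_trans_of_irrefl _
  suffices H : ∀ n (T : Finset ι), T ⊆ D → (D \ T).card = n →
      (∑ u : ∀ j, S j, if ((∀ j, E j X → u j = v j) ∧ ∀ j ∈ T, u j = v j)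
          then ∏ i ∈ Tᶜ, F i u else 0)
        = ∑ u : ∀ j, S j, if ((∀ j, E j X → u j = v j) ∧ ∀ j ∈ D, u j = v j)
          then ∏ i ∈ Dᶜ, F i u else 0 by
    have h0 := H (D \ ∅).card ∅ (Finset.empty_subset _) rfl
    simpa [Finset.compl_empty] using h0
  intro n
  induction n using Nat.strong_induction_on with
  | _ n ih =>
    intro T hTD hcard
    by_cases hTeq : T = D
    · subst hTeq; rfl
    · have hne : (D \ T).Nonempty := by
        rw [Finset.sdiff_nonempty]
        intro h
        exact hTeq (Finset.Subset.antisymm hTD h)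
      obtain ⟨m, hm, hmin⟩ := hwf.has_min (↑(D \ T) : Set ι) (by exact_mod_cast hne)
      simp only [Finset.coe_sdiff, Set.mem_diff, Finset.mem_coe] at hm
      have hmD : m ∈ D := by
        have := hm
        exact Finset.mem_coe.mp (by exact_mod_cast this.1)
      have hmT : m ∉ T := by
        have := hm
        exact fun h => this.2 (Finset.mem_coe.mpr h)
      have hmDT : m ∈ D \ T := Finset.mem_sdiff.mpr ⟨hmD, hmT⟩
      have hmax : ∀ t ∈ D \ T, ¬ Relation.TransGen E m t := by
        intro t ht h
        exact hmin t (by exact_mod_cast ht) h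
      have hchild : ∀ c, E m c → c ∈ T := by
        intro c hc
        have hcD : c ∈ D := hDclosed m hmD c hc
        by_contra hcT
        exact hmax c (Finset.mem_sdiff.mpr ⟨hcD, hcT⟩) (Relation.TransGen.single hc)
      -- step: sum with T equals sum with insert m T
      have hstep :
          (∑ u : ∀ j, S j, if ((∀ j, E j X → u j = v j) ∧ ∀ j ∈ T, u j = v j)
              then ∏ i ∈ Tᶜ, F i u else 0)
            = ∑ u : ∀ j, S j, if ((∀ j, E j X → u j = v j) ∧ ∀ j ∈ insert m T, u j = v j)
              then ∏ i ∈ (insert m T)ᶜ, F i u else 0 := by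
        rw [pi_sum_update m (v m)]
        refine Finset.sum_congr rfl fun w _ => ?_
        have hupd_par : ∀ (x : S m) j, E j X → Function.update w m x j = w j := by
          intro x j hj
          have : j ≠ m := fun h => hXpar j hj (h ▸ hmD)
          exact Function.update_of_ne this _ _
        have hupd_T : ∀ (x : S m) j, j ∈ T → Function.update w m x j = w j := by
          intro x j hj
          have : j ≠ m := fun h => hmT (h ▸ hj)
          exact Function.update_of_ne this _ _
        by_cases hc : w m = v m ∧ (∀ j, E j X → w j = v j) ∧ (∀ j ∈ T, w j = v j)
        · obtain ⟨h1, h2, h3⟩ := hc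
          have hcond' : (∀ j, E j X → w j = v j) ∧ ∀ j ∈ insert m T, w j = v j :=
            ⟨h2, by
              intro j hj
              rcases Finset.mem_insert.mp hj with rfl | hj
              · exact h1
              · exact h3 j hj⟩
          rw [if_pos hcond']
          have hkey : ∀ x : S m,
              (if w m = v m then
                (if ((∀ j, E j X → Function.update w m x j = v j) ∧
                      ∀ j ∈ T, Function.update w m x j = v j)
                  then ∏ i ∈ Tᶜ, F i (Function.update w m x) else 0)
                else 0)
              = F m (Function.update w m x) * ∏ i ∈ (insert m T)ᶜ, F i w := by
            intro x
            rw [if_pos h1]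
            have hcondu : (∀ j, E j X → Function.update w m x j = v j) ∧
                ∀ j ∈ T, Function.update w m x j = v j :=
              ⟨fun j hj => (hupd_par x j hj).trans (h2 j hj),
               fun j hj => (hupd_T x j hj).trans (h3 j hj)⟩
            rw [if_pos hcondu]
            have hmem : m ∈ Tᶜ := Finset.mem_compl.mpr hmT
            rw [← Finset.mul_prod_erase _ _ hmem]
            congr 1
            rw [← Finset.compl_insert]
            refine Finset.prod_congr rfl fun i hi => ?_
            rw [Finset.compl_insert, Finset.mem_erase, Finset.mem_compl] at hi
            refine hloc i _ _ ?_ ?_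
            · intro j hj
              have : j ≠ m := by
                rintro rfl
                exact hi.2 (hchild i hj)
              exact Function.update_of_ne this _ _
            · exact Function.update_of_ne hi.1 _ _
          rw [Finset.sum_congr rfl fun x _ => hkey x, ← Finset.sum_mul, hsum m w, one_mul]
        · rw [if_neg (by
            intro ⟨ha, hb⟩
            exact hc ⟨hb m (Finset.mem_insert_self _ _), ha,
              fun j hj => hb j (Finset.mem_insert_of_mem hj)⟩)]
          refine Finset.sum_eq_zero fun x _ => ?_
          by_cases h1 : w m = v m
          · rw [if_pos h1]
            rw [if_neg]
            intro ⟨ha, hb⟩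
            exact hc ⟨h1, fun j hj => (hupd_par x j hj).symm.trans (ha j hj),
              fun j hj => (hupd_T x j hj).symm.trans (hb j hj)⟩
          · rw [if_neg h1]
      rw [hstep]
      have hsub : insert m T ⊆ D := Finset.insert_subset hmD hTD
      have hlt : (D \ insert m T).card < n := by
        have hpos : 0 < n := hcard ▸ Finset.card_pos.mpr hne
        rw [Finset.sdiff_insert, Finset.card_erase_of_mem hmDT, hcard]
        omega
      exact ih _ hlt (insert m T) hsub rfl

/-- If two Bayesian networks on the same finite DAG (edge relation `E`,
`E j i` meaning `j` is a parent of `i`) have CPTs agreeing on every variable except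
possibly `X`, then the induced joint distributions agree on the marginal over the
parents `P` of `X`; in particular `Pr₁(p) = 0 ↔ Pr₂(p) = 0`. -/
theorem replace_cpt_preserves_parent_marginal
    {ι : Type*} [Fintype ι] [DecidableEq ι]
    {S : ι → Type*} [∀ i, Fintype (S i)] [∀ i, DecidableEq (S i)]
    (E : ι → ι → Prop)
    (hacyc : ∀ i, ¬ Relation.TransGen E i i)
    (X : ι)
    (F₁ F₂ : (i : ι) → (∀ j, S j) → ℝ)
    (hloc₁ : ∀ i v w, (∀ j, E j i → v j = w j) → v i = w i → F₁ i v = F₁ i w)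
    (hloc₂ : ∀ i v w, (∀ j, E j i → v j = w j) → v i = w i → F₂ i v = F₂ i w)
    (hnn₁ : ∀ i v, 0 ≤ F₁ i v) (hnn₂ : ∀ i v, 0 ≤ F₂ i v)
    (hsum₁ : ∀ i v, ∑ x : S i, F₁ i (Function.update v i x) = 1)
    (hsum₂ : ∀ i v, ∑ x : S i, F₂ i (Function.update v i x) = 1)
    (hagree : ∀ i, i ≠ X → F₁ i = F₂ i) :
    ∀ v : ∀ j, S j,
      ((∑ u : ∀ j, S j, if (∀ j, E j X → u j = v j) then ∏ i, F₁ i u else 0)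
        = ∑ u : ∀ j, S j, if (∀ j, E j X → u j = v j) then ∏ i, F₂ i u else 0) ∧
      ((∑ u : ∀ j, S j, if (∀ j, E j X → u j = v j) then ∏ i, F₁ i u else 0) = 0 ↔
       (∑ u : ∀ j, S j, if (∀ j, E j X → u j = v j) then ∏ i, F₂ i u else 0) = 0) := by
  intro v
  have h1 := marginal_sumout E hacyc X F₁ hloc₁ hsum₁ v
  have h2 := marginal_sumout E hacyc X F₂ hloc₂ hsum₂ v
  have heq : (∑ u : ∀ j, S j, if (∀ j, E j X → u j = v j) then ∏ i, F₁ i u else 0)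
      = ∑ u : ∀ j, S j, if (∀ j, E j X → u j = v j) then ∏ i, F₂ i u else 0 := by
    rw [h1, h2]
    refine Finset.sum_congr rfl fun u _ => ?_
    by_cases hc : (∀ j, E j X → u j = v j) ∧
        ∀ j ∈ Finset.univ.filter (fun i => i = X ∨ Relation.TransGen E X i), u j = v j
    · rw [if_pos hc, if_pos hc]
      refine Finset.prod_congr rfl fun i hi => ?_
      rw [Finset.mem_compl, Finset.mem_filter] at hi
      have hiX : i ≠ X := fun h => hi ⟨Finset.mem_univ _, Or.inl h⟩
      rw [hagree i hiX]
    · rw [if_neg hc, if_neg hc]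
  exact ⟨heq, by rw [heq]⟩
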